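/- For 0 < σ < 1, real μ with μ - σk ∉ ℤ for all integers k ≥ 0, ϑ = 1/2 - μ, δ = 1 - μ, and real x: φ(-σ,μ;x) = (1/(2π)) [ e^{πiϑ} Ψ(x e^{πiσ}) + e^{-πiϑ} Ψ(x e^{-πiσ}) ], where φ(-σ,μ;z) = Σ_{k≥0} z^k/(k! Γ(μ-σk)) and Ψ(z) = Σ_{k≥0} (z^k/k!) Γ(σk+δ). -/

import Mathlib

open Real Complex

/-- The Wright function `φ(-σ, μ; z)`. -/
noncomputable def wright (σ μ : ℝ) (z : ℂ) : ℂ :=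
  ∑' k : ℕ, z ^ k * ((Real.Gamma (μ - σ * k))⁻¹ : ℝ) / (k.factorial : ℂ)

/-- The auxiliary function `Ψ(z) = Σ_{k≥0} Γ(σk + δ) z^k / k!`. -/
noncomputable def Psi (σ δ : ℝ) (z : ℂ) : ℂ :=
  ∑' k : ℕ, z ^ k / (k.factorial : ℂ) * (Real.Gamma (σ * k + δ) : ℝ)

section Aux
open Real

lemma gamma_step {σ s : ℝ} (h0 : 0 < σ) (h1 : σ < 1) (hs : 0 < s) :
    Real.Gamma (s + σ) ≤ Real.Gamma s * s ^ σ := by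
  have hG := Real.Gamma_pos_of_pos hs
  have hG1 := Real.Gamma_pos_of_pos (by linarith : (0:ℝ) < s + 1)
  have hc := Real.convexOn_log_Gamma.2 (Set.mem_Ioi.2 hs)
    (Set.mem_Ioi.2 (by linarith : (0:ℝ) < s + 1)) (by linarith : (0:ℝ) ≤ 1 - σ)
    h0.le (by ring)
  have hcomb : (1 - σ) • s + σ • (s + 1) = s + σ := by simp [smul_eq_mul]; ring
  rw [hcomb] at hc
  simp only [Function.comp_apply, smul_eq_mul] at hc
  have hadd : Real.Gamma (s + 1) = s * Real.Gamma s := Real.Gamma_add_one hs.ne'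
  rw [hadd, Real.log_mul hs.ne' hG.ne'] at hc
  have hlog : (1 - σ) * Real.log (Real.Gamma s) + σ * (Real.log s + Real.log (Real.Gamma s))
      = Real.log (Real.Gamma s * s ^ σ) := by
    rw [Real.log_mul hG.ne' (Real.rpow_pos_of_pos hs σ).ne', Real.log_rpow hs]
    ring
  rw [hlog] at hc
  have := Real.exp_le_exp.2 hc
  rwa [Real.exp_log (Real.Gamma_pos_of_pos (by linarith)), Real.exp_log (by positivity)] at this

lemma psi_summable {σ : ℝ} (h0 : 0 < σ) (h1 : σ < 1) (δ : ℝ) (z : ℂ) :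
    Summable (fun k : ℕ => z ^ k / (k.factorial : ℂ) * ((Real.Gamma (σ * k + δ) : ℝ) : ℂ)) := by
  apply summable_of_ratio_norm_eventually_le (r := 1/2) (by norm_num)
  have t1 : Filter.Tendsto (fun k : ℕ => σ * k + δ) Filter.atTop Filter.atTop := by
    apply Filter.tendsto_atTop_add_const_right
    exact (tendsto_natCast_atTop_atTop (R := ℝ)).const_mul_atTop h0
  have E1 : ∀ᶠ k : ℕ in Filter.atTop, 1 ≤ σ * k + δ := t1.eventually_ge_atTop 1
  have t2 : Filter.Tendsto (fun k : ℕ => ((k : ℝ) + 1) - (σ * (k + 1) + δ)) Filter.atTop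
      Filter.atTop := by
    have : (fun k : ℕ => ((k : ℝ) + 1) - (σ * (k + 1) + δ))
        = fun k : ℕ => (1 - σ) * k + (1 - σ - δ) := by funext k; ring
    rw [this]
    apply Filter.tendsto_atTop_add_const_right
    exact (tendsto_natCast_atTop_atTop (R := ℝ)).const_mul_atTop (by linarith)
  have E2 : ∀ᶠ k : ℕ in Filter.atTop, σ * (k + 1) + δ ≤ (k : ℝ) + 1 := by
    filter_upwards [t2.eventually_ge_atTop 0] with k hk; linarith
  have t3 : Filter.Tendsto (fun k : ℕ => ((k : ℝ) + 1) ^ (1 - σ)) Filter.atTop Filter.atTop :=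
    (tendsto_rpow_atTop (by linarith)).comp
      (Filter.tendsto_atTop_add_const_right _ 1 (tendsto_natCast_atTop_atTop (R := ℝ)))
  have E3 : ∀ᶠ k : ℕ in Filter.atTop, 2 * ‖z‖ ≤ ((k : ℝ) + 1) ^ (1 - σ) :=
    t3.eventually_ge_atTop _
  filter_upwards [E1, E2, E3] with k ha hb hc
  set a : ℝ := σ * k + δ with hadef
  have ha0 : 0 < a := by linarith
  have hg : 0 < Real.Gamma a := Real.Gamma_pos_of_pos ha0
  have hstep : Real.Gamma (a + σ) ≤ Real.Gamma a * a ^ σ := gamma_step h0 h1 ha0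
  have hkey : σ * (k + 1 : ℕ) + δ = a + σ := by push_cast; ring
  have hnorm : ∀ m : ℕ, ‖z ^ m / (m.factorial : ℂ) * ((Real.Gamma (σ * m + δ) : ℝ) : ℂ)‖
      = ‖z‖ ^ m / (m.factorial : ℝ) * |Real.Gamma (σ * m + δ)| := by
    intro m
    rw [norm_mul, norm_div, norm_pow, Complex.norm_real, Complex.norm_natCast, Real.norm_eq_abs]
  rw [hnorm, hnorm, hkey]
  have haσ : |Real.Gamma a| = Real.Gamma a := abs_of_pos hg
  have haσ' : |Real.Gamma (a + σ)| = Real.Gamma (a + σ) :=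
    abs_of_pos (Real.Gamma_pos_of_pos (by linarith))
  rw [haσ, haσ']
  have hfact : ((k + 1 : ℕ).factorial : ℝ) = ((k : ℝ) + 1) * (k.factorial : ℝ) := by
    rw [Nat.factorial_succ]; push_cast; ring
  have hn1 : (0 : ℝ) < (k : ℝ) + 1 := by positivity
  have haub : a ≤ (k : ℝ) + 1 := by
    have : a ≤ σ * (k + 1) + δ := by simp only [hadef]; nlinarith
    linarith
  have hrp : a ^ σ ≤ ((k : ℝ) + 1) ^ σ := Real.rpow_le_rpow ha0.le haub h0.le
  -- key scalar inequality : ‖z‖ * ((k:ℝ)+1) ^ σ ≤ ((k:ℝ)+1) / 2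
  have hsplit : ((k : ℝ) + 1) = ((k : ℝ) + 1) ^ (1 - σ) * ((k : ℝ) + 1) ^ σ := by
    rw [← Real.rpow_add hn1]; norm_num
  have hscalar : ‖z‖ * ((k : ℝ) + 1) ^ σ ≤ ((k : ℝ) + 1) / 2 := by
    have h4 := mul_le_mul_of_nonneg_right hc (Real.rpow_nonneg hn1.le σ)
    nlinarith [hsplit]
  have hrknn : (0 : ℝ) ≤ ‖z‖ ^ k := by positivity
  have hfk : (0 : ℝ) < (k.factorial : ℝ) := by positivity
  calc ‖z‖ ^ (k + 1) / ((k + 1 : ℕ).factorial : ℝ) * Real.Gamma (a + σ)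
      ≤ ‖z‖ ^ (k + 1) / ((k + 1 : ℕ).factorial : ℝ) * (Real.Gamma a * a ^ σ) := by
        apply mul_le_mul_of_nonneg_left hstep; positivity
    _ ≤ ‖z‖ ^ (k + 1) / ((k + 1 : ℕ).factorial : ℝ) * (Real.Gamma a * ((k : ℝ) + 1) ^ σ) := by
        apply mul_le_mul_of_nonneg_left _ (by positivity)
        exact mul_le_mul_of_nonneg_left hrp hg.le
    _ = (‖z‖ * ((k : ℝ) + 1) ^ σ) * (‖z‖ ^ k / (k.factorial : ℝ) * Real.Gamma a) / ((k:ℝ)+1) := by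
        rw [hfact, pow_succ]; field_simp
    _ ≤ (((k : ℝ) + 1) / 2) * (‖z‖ ^ k / (k.factorial : ℝ) * Real.Gamma a) / ((k:ℝ)+1) := by
        gcongr
    _ = 1 / 2 * (‖z‖ ^ k / (k.factorial : ℝ) * Real.Gamma a) := by field_simp

lemma inv_gamma_reflect {σ μ : ℝ} (hμ : ∀ k : ℕ, ∀ m : ℤ, μ - σ * k ≠ (m : ℝ)) (k : ℕ) :
    (Real.Gamma (μ - σ * k))⁻¹
      = Real.Gamma (σ * k + (1 - μ)) * Real.cos (π * (1/2 - μ) + π * σ * k) / π := by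
  set s : ℝ := μ - σ * k with hs
  have hsin : Real.sin (π * s) ≠ 0 := by
    intro h
    rcases Real.sin_eq_zero_iff.1 h with ⟨n, hn⟩
    have h2 : π * s = π * n := by linarith
    exact hμ k n (mul_left_cancel₀ Real.pi_ne_zero h2)
  have hΓ : Real.Gamma s ≠ 0 := by
    apply Real.Gamma_ne_zero
    intro m hm
    exact hμ k (-m) (by push_cast; linarith [hm])
  have harg : π * (1/2 - μ) + π * σ * k = π / 2 - π * s := by rw [hs]; ring
  have harg2 : σ * k + (1 - μ) = 1 - s := by rw [hs]; ring
  rw [harg, harg2, Real.cos_pi_div_two_sub]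
  have h := Real.Gamma_mul_Gamma_one_sub s
  field_simp
  have hsin' : Real.sin (s * π) ≠ 0 := by rwa [mul_comm]
  field_simp at h
  linarith [h]

open Complex in
theorem stmt_9' (σ μ : ℝ) (hσ : 0 < σ ∧ σ < 1)
    (hμ : ∀ k : ℕ, ∀ m : ℤ, μ - σ * k ≠ (m : ℝ)) (x : ℝ) :
    (∑' k : ℕ, (x:ℂ) ^ k * ((Real.Gamma (μ - σ * k))⁻¹ : ℝ) / (k.factorial : ℂ))
      = (1 / (2 * π)) *
          (Complex.exp (π * Complex.I * ((1 / 2 : ℝ) - μ)) *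
              (∑' k : ℕ, ((x : ℂ) * Complex.exp (π * Complex.I * (σ : ℝ))) ^ k / (k.factorial : ℂ) * (Real.Gamma (σ * k + (1 - μ)) : ℝ)) +
            Complex.exp (-(π * Complex.I * ((1 / 2 : ℝ) - μ))) *
              (∑' k : ℕ, ((x : ℂ) * Complex.exp (-(π * Complex.I * (σ : ℝ)))) ^ k / (k.factorial : ℂ) * (Real.Gamma (σ * k + (1 - μ)) : ℝ))) := by
  obtain ⟨h0, h1⟩ := hσ
  have hg1 := (psi_summable h0 h1 (1 - μ)
    ((x : ℂ) * Complex.exp (π * Complex.I * (σ : ℝ)))).mul_left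
    (Complex.exp (π * Complex.I * ((1 / 2 : ℝ) - μ)))
  have hg2 := (psi_summable h0 h1 (1 - μ)
    ((x : ℂ) * Complex.exp (-(π * Complex.I * (σ : ℝ))))).mul_left
    (Complex.exp (-(π * Complex.I * ((1 / 2 : ℝ) - μ))))
  rw [← tsum_mul_left, ← tsum_mul_left, ← Summable.tsum_add hg1 hg2, ← tsum_mul_left]
  refine tsum_congr fun k => ?_
  rw [inv_gamma_reflect hμ k]
  have hE : Complex.exp (π * Complex.I * ((1 / 2 : ℝ) - μ)) *
        Complex.exp (π * Complex.I * (σ : ℝ)) ^ k +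
      Complex.exp (-(π * Complex.I * ((1 / 2 : ℝ) - μ))) *
        Complex.exp (-(π * Complex.I * (σ : ℝ))) ^ k
      = 2 * ((Real.cos (π * (1/2 - μ) + π * σ * k) : ℝ) : ℂ) := by
    rw [← Complex.exp_nat_mul, ← Complex.exp_nat_mul, ← Complex.exp_add, ← Complex.exp_add,
      Complex.ofReal_cos]
    push_cast
    rw [show (π : ℂ) * Complex.I * (1/2 - (μ:ℂ)) + (k : ℂ) * ((π : ℂ) * Complex.I * (σ:ℂ))
        = ((π:ℂ) * (1/2 - (μ:ℂ)) + (π:ℂ) * (σ:ℂ) * (k:ℂ)) * Complex.I from by ring,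
      show -((π : ℂ) * Complex.I * (1/2 - (μ:ℂ))) + (k : ℂ) * -((π : ℂ) * Complex.I * (σ:ℂ))
        = -((π:ℂ) * (1/2 - (μ:ℂ)) + (π:ℂ) * (σ:ℂ) * (k:ℂ)) * Complex.I from by ring,
      ← Complex.two_cos]
  rw [mul_pow, mul_pow]
  push_cast
  push_cast at hE
  linear_combination (-((x:ℂ) ^ k * ((Real.Gamma (σ * k + (1 - μ)) : ℝ) : ℂ) /
    (2 * (π : ℂ) * (k.factorial : ℂ)))) * hE

end Aux

theorem stmt_9 (σ μ : ℝ) (hσ : 0 < σ ∧ σ < 1)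
    (hμ : ∀ k : ℕ, ∀ m : ℤ, μ - σ * k ≠ (m : ℝ)) (x : ℝ) :
    wright σ μ (x : ℂ)
      = (1 / (2 * π)) *
          (Complex.exp (π * Complex.I * ((1 / 2 : ℝ) - μ)) *
              Psi σ (1 - μ) ((x : ℂ) * Complex.exp (π * Complex.I * (σ : ℝ))) +
            Complex.exp (-(π * Complex.I * ((1 / 2 : ℝ) - μ))) *
              Psi σ (1 - μ) ((x : ℂ) * Complex.exp (-(π * Complex.I * (σ : ℝ))))) := by
  unfold wright Psi
  exact stmt_9' σ μ hσ hμ x
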